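/- In the example of Figure 5 (Theorem 2 tightness): n players, k compromised, compromised agent i chooses between a shared resource of value 1+ε (shared with all compromised agents and one non-compromised agent with no alternative) and a private resource of value 1; welfare is additive over distinct selected resources. Each compromised agent, maximizing the value of its own action in isolation, selects the 1+ε resource; the resulting equilibrium has welfare 1+ε while the optimum has welfare k + 1 + ε; hence the ratio tends to 1/(1+k) as ε → 0. -/

import Mathlib

/-- Tightness construction for Theorem 2: compromised agents all choose the
shared `1 + ε` resource, the equilibrium welfare is `1 + ε`, the optimum is
`k + 1 + ε`, and the ratio tends to `1/(1+k)` as `ε → 0⁺`. -/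
theorem mc_poa_tightness {n : ℕ} (k : ℕ) (K : Finset (Fin n)) (hK : K.card = k)
    (j₀ : Fin n) (hj₀ : j₀ ∉ K)
    (ε : ℝ) (hε : 0 < ε)
    (v : Option (Fin n) → ℝ)
    (hvc : v none = 1 + ε)
    (hvp : ∀ i, v (some i) = 1)
    (W : (Fin n → Finset (Option (Fin n))) → ℝ)
    (hW : ∀ a, W a = ∑ r ∈ Finset.univ.biUnion a, v r)
    (ane aopt : Fin n → Finset (Option (Fin n)))
    (hane : ∀ i, ane i = if i ∈ K ∨ i = j₀ then {none} else ∅)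
    (haopt : ∀ i, aopt i =
      if i ∈ K then {some i} else if i = j₀ then {none} else ∅) :
    (∀ i ∈ K, v none > v (some i)) ∧
    W ane = 1 + ε ∧
    W aopt = (k : ℝ) + 1 + ε ∧
    Filter.Tendsto (fun e : ℝ => (1 + e) / ((k : ℝ) + 1 + e))
      (nhdsWithin 0 (Set.Ioi 0)) (nhds (1 / (1 + (k : ℝ)))) := by
  refine ⟨?_, ?_, ?_, ?_⟩
  · intro i hi
    rw [hvc, hvp]; linarith
  · have hb : Finset.univ.biUnion ane = ({none} : Finset (Option (Fin n))) := by
      ext r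
      simp only [Finset.mem_biUnion, Finset.mem_univ, true_and, hane,
        Finset.mem_singleton]
      constructor
      · rintro ⟨i, hi⟩
        by_cases h : i ∈ K ∨ i = j₀
        · simpa [h] using hi
        · simp [h] at hi
      · rintro rfl
        exact ⟨j₀, by simp⟩
    rw [hW, hb, Finset.sum_singleton, hvc]
  · have hb : Finset.univ.biUnion aopt =
        insert none (K.image some) := by
      ext r
      simp only [Finset.mem_biUnion, Finset.mem_univ, true_and, haopt,
        Finset.mem_insert, Finset.mem_image]
      constructor
      · rintro ⟨i, hi⟩
        by_cases h : i ∈ K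
        · have hr : r = some i := by simpa [h] using hi
          exact Or.inr ⟨i, h, hr.symm⟩
        · by_cases h2 : i = j₀
          · left; simpa [h2, hj₀] using hi
          · simp [h, h2] at hi
      · rintro (rfl | ⟨i, hi, rfl⟩)
        · exact ⟨j₀, by simp [fun h => hj₀ h]⟩
        · exact ⟨i, by simp [hi]⟩
    rw [hW, hb, Finset.sum_insert (by simp), hvc]
    have : ∑ r ∈ K.image some, v r = (k : ℝ) := by
      rw [Finset.sum_image (by simp)]
      simp [hvp, hK]
    rw [this]; ring
  · have hne : (1 + (k : ℝ)) ≠ 0 := by positivity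
    have : Filter.Tendsto (fun e : ℝ => (1 + e) / ((k : ℝ) + 1 + e))
        (nhds 0) (nhds (1 / (1 + (k : ℝ)))) := by
      have h1 : Filter.Tendsto (fun e : ℝ => 1 + e) (nhds 0) (nhds 1) := by
        have hc : Continuous fun e : ℝ => 1 + e := continuous_const.add continuous_id
        exact hc.tendsto' 0 1 (by simp)
      have h2 : Filter.Tendsto (fun e : ℝ => (k : ℝ) + 1 + e) (nhds 0)
          (nhds ((k : ℝ) + 1)) := by
        have hc : Continuous fun e : ℝ => (k : ℝ) + 1 + e := continuous_const.add continuous_id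
        exact hc.tendsto' 0 ((k : ℝ) + 1) (by simp)
      have h3 : Filter.Tendsto (fun e : ℝ => (1 + e) / ((k : ℝ) + 1 + e)) (nhds 0)
          (nhds (1 / ((k : ℝ) + 1))) := h1.div h2 (by linarith [Nat.cast_nonneg (α := ℝ) k])
      rw [add_comm (1 : ℝ) (k : ℝ)]; exact h3
    exact this.mono_left nhdsWithin_le_nhds
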